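/- Define f : ℕ → ℕ by f(1) = 1 and f(n) = C(n, ⌊n/2⌋)·(f(⌊n/2⌋) + f(⌈n/2⌉)) for n > 1. Then for all n ≥ 1, f(n+1) ≥ 3·f(n). -/
import Mathlib

def f : ℕ → ℕ
  | 0 => 1
  | 1 => 1
  | n + 2 => Nat.choose (n + 2) ((n + 2) / 2) * (f ((n + 2) / 2) + f ((n + 2 + 1) / 2))
decreasing_by all_goals omega

lemma feven (k : ℕ) : f (2*k+2) = Nat.choose (2*k+2) (k+1) * (f (k+1) + f (k+1)) := by
  rw [show 2*k+2 = (2*k)+2 by ring, f]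
  have h1 : (2*k+2)/2 = k+1 := by omega
  have h2 : (2*k+2+1)/2 = k+1 := by omega
  rw [h1, h2]

lemma fodd (k : ℕ) : f (2*k+3) = Nat.choose (2*k+3) (k+1) * (f (k+1) + f (k+2)) := by
  rw [show 2*k+3 = (2*k+1)+2 by ring, f]
  have h1 : (2*k+1+2)/2 = k+1 := by omega
  have h2 : (2*k+1+2+1)/2 = k+2 := by omega
  rw [h1, h2]

lemma chA (k : ℕ) : 3 * Nat.choose (2*k+2) (k+1) ≤ 2 * Nat.choose (2*k+3) (k+1) := by
  have hp := Nat.choose_succ_right_eq (2*(k+1)) k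
  rw [show 2*(k+1) - k = k+2 by omega, show 2*(k+1) = 2*k+2 by ring] at hp
  have hpas : Nat.choose (2*k+3) (k+1) = Nat.choose (2*k+2) k + Nat.choose (2*k+2) (k+1) := by
    rw [show 2*k+3 = (2*k+2)+1 by ring]
    exact Nat.choose_succ_succ (2*k+2) k
  have hpos : 0 < Nat.choose (2*k+2) (k+1) := Nat.choose_pos (by omega)
  nlinarith [hp, hpas, hpos]

lemma chB (k : ℕ) : Nat.choose (2*k+4) (k+2) = 2 * Nat.choose (2*k+3) (k+1) := by
  have hpas : Nat.choose (2*k+4) (k+2) = Nat.choose (2*k+3) (k+1) + Nat.choose (2*k+3) (k+2) := by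
    rw [show 2*k+4 = (2*k+3)+1 by ring]
    exact Nat.choose_succ_succ (2*k+3) (k+1)
  have hsym : Nat.choose (2*k+3) (k+2) = Nat.choose (2*k+3) (k+1) := by
    rw [← Nat.choose_symm (by omega : k+2 ≤ 2*k+3)]
    congr 1; omega
  omega

theorem stmt_8 (n : ℕ) (hn : 1 ≤ n) : 3 * f n ≤ f (n + 1) := by
  induction n using Nat.strong_induction_on with
  | _ n ih =>
    rcases Nat.even_or_odd n with h | h
    · obtain ⟨k, rfl⟩ : ∃ k, n = 2*k+2 := by rcases h with ⟨m,hm⟩; exact ⟨m-1, by omega⟩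
      rw [feven, show 2*k+2+1 = 2*k+3 from rfl, fodd]
      have hih : 3 * f (k+1) ≤ f (k+2) := ih (k+1) (by omega) (by omega)
      have hA := chA k
      have hpos : 0 < Nat.choose (2*k+3) (k+1) := Nat.choose_pos (by omega)
      nlinarith [Nat.mul_le_mul_left (Nat.choose (2*k+3) (k+1)) hih,
        Nat.mul_le_mul_right (f (k+1)) hA]
    · rcases h with ⟨m, hm⟩
      match m, hm with
      | 0, hm =>
        subst hm; norm_num [show (2:ℕ) = 0+2 from rfl, f]
      | (k+1), hm =>
        subst hm
        rw [show 2*(k+1)+1 = 2*k+3 by ring, fodd, show 2*k+3+1 = 2*(k+1)+2 by ring, feven,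
          show 2*(k+1)+2 = 2*k+4 by ring, show (k+1)+1 = k+2 from rfl, chB k]
        have hih : 3 * f (k+1) ≤ f (k+2) := ih (k+1) (by omega) (by omega)
        have hpos : 0 < Nat.choose (2*k+3) (k+1) := Nat.choose_pos (by omega)
        nlinarith [Nat.mul_le_mul_left (Nat.choose (2*k+3) (k+1)) hih]
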